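/- Let d ≥ 1 and let s₁, s₂ be points of the unit sphere 𝕊^d ⊂ ℝ^{d+1} at the same latitude, i.e. (s₁)_{d+1} = (s₂)_{d+1} < 1. Then arccos(⟨s₁, s₂⟩) ≤ ‖h₁(φ(s₁)) − h₁(φ(s₂))‖ and arccos(⟨s₁, s₂⟩) ≤ 2π − ‖h₁(φ(s₁)) − h₁(φ(s₂))‖; that is, arccos(⟨s₁, s₂⟩) ≤ min( ‖h₁(φ(s₁)) − h₁(φ(s₂))‖ , 2π − ‖h₁(φ(s₁)) − h₁(φ(s₂))‖ ). -/

import Mathlib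

open Real
open scoped RealInnerProductSpace

noncomputable section

/-- The first `d` coordinates of a point of `ℝ^{d+1}`, i.e. `s[1:d]`. -/
def stereoProj {d : ℕ} (s : EuclideanSpace ℝ (Fin (d + 1))) : EuclideanSpace ℝ (Fin d) :=
  WithLp.toLp 2 (fun i => s (Fin.castSucc i))

/-- The stereographic projection `φ(s) = s[1:d] / (1 - s_{d+1})`. -/
def stereo {d : ℕ} (s : EuclideanSpace ℝ (Fin (d + 1))) : EuclideanSpace ℝ (Fin d) :=
  (1 - s (Fin.last d))⁻¹ • stereoProj s

open Classical in
/-- The map `h₁(x) = arccos((1 - ‖x‖²)/(1 + ‖x‖²)) • x/‖x‖` for `x ≠ 0`, `h₁(0) = 0`. -/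
def h1 {d : ℕ} (x : EuclideanSpace ℝ (Fin d)) : EuclideanSpace ℝ (Fin d) :=
  if x = 0 then 0 else Real.arccos ((1 - ‖x‖ ^ 2) / (1 + ‖x‖ ^ 2)) • ‖x‖⁻¹ • x

/-- The north pole `s_n = (0, …, 0, 1)` of `𝕊^d ⊂ ℝ^{d+1}`. -/
def northPole (d : ℕ) : EuclideanSpace ℝ (Fin (d + 1)) :=
  EuclideanSpace.single (Fin.last d) 1

/-- The south pole `s₀ = (0, …, 0, -1)` of `𝕊^d ⊂ ℝ^{d+1}`. -/
def southPole (d : ℕ) : EuclideanSpace ℝ (Fin (d + 1)) :=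
  EuclideanSpace.single (Fin.last d) (-1)

end

lemma my_arccos_anti {x y : ℝ} (h : x ≤ y) : Real.arccos y ≤ Real.arccos x := by
  simp only [Real.arccos]
  have := Real.monotone_arcsin h
  linarith

lemma my_key {ρ w : ℝ} (hρ0 : 0 ≤ ρ) (hρπ : ρ ≤ π) (hw0 : 0 ≤ w) (hw2 : w ≤ 2) :
    Real.cos (ρ * w) ≤ 1 - Real.sin ρ ^ 2 * w ^ 2 / 2 := by
  have hcon := strictConcaveOn_sin_Icc.concaveOn
  have hmem0 : (0:ℝ) ∈ Set.Icc (0:ℝ) π := ⟨le_refl _, Real.pi_pos.le⟩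
  have hmemρ : ρ ∈ Set.Icc (0:ℝ) π := ⟨hρ0, hρπ⟩
  have hcc := hcon.2 hmem0 hmemρ (show (0:ℝ) ≤ 1 - w/2 by linarith)
    (show (0:ℝ) ≤ w/2 by linarith) (show (1 - w/2) + w/2 = 1 by ring)
  simp only [smul_eq_mul, mul_zero, Real.sin_zero, zero_add, add_zero] at hcc
  have hsρ : 0 ≤ Real.sin ρ := Real.sin_nonneg_of_nonneg_of_le_pi hρ0 hρπ
  have hb : 0 ≤ w/2 * Real.sin ρ := by positivity
  have h2 : Real.cos (ρ*w) = 1 - 2 * Real.sin (w/2 * ρ) ^ 2 := by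
    rw [show ρ*w = 2*(w/2*ρ) by ring, Real.cos_two_mul]
    have := Real.sin_sq_add_cos_sq (w/2*ρ)
    nlinarith
  nlinarith [hcc, hb, sq_nonneg (Real.sin (w/2*ρ) - w/2 * Real.sin ρ)]

lemma my_inner_split {d : ℕ} (s₁ s₂ : EuclideanSpace ℝ (Fin (d + 1))) :
    ⟪s₁, s₂⟫ = ⟪stereoProj s₁, stereoProj s₂⟫ + s₁ (Fin.last d) * s₂ (Fin.last d) := by
  simp only [PiLp.inner_apply, RCLike.inner_apply, conj_trivial, stereoProj]
  rw [Fin.sum_univ_castSucc]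
  simp only [WithLp.ofLp_toLp, mul_comm]


set_option maxHeartbeats 1000000 in
/-- for `s₁, s₂ ∈ 𝕊^d` at the same latitude `(s₁)_{d+1} = (s₂)_{d+1} < 1`,
`arccos ⟨s₁, s₂⟩ ≤ min(‖h₁(φ(s₁)) - h₁(φ(s₂))‖, 2π - ‖h₁(φ(s₁)) - h₁(φ(s₂))‖)`. -/
theorem stmt5 {d : ℕ} (hd : 1 ≤ d) (s₁ s₂ : EuclideanSpace ℝ (Fin (d + 1)))
    (hs₁ : ‖s₁‖ = 1) (hs₂ : ‖s₂‖ = 1)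
    (hlat : s₁ (Fin.last d) = s₂ (Fin.last d)) (hlt : s₁ (Fin.last d) < 1) :
    Real.arccos ⟪s₁, s₂⟫ ≤ ‖h1 (stereo s₁) - h1 (stereo s₂)‖ ∧
      Real.arccos ⟪s₁, s₂⟫ ≤ 2 * π - ‖h1 (stereo s₁) - h1 (stereo s₂)‖ ∧
      Real.arccos ⟪s₁, s₂⟫ ≤
        min (‖h1 (stereo s₁) - h1 (stereo s₂)‖) (2 * π - ‖h1 (stereo s₁) - h1 (stereo s₂)‖) := by
  set t := s₁ (Fin.last d) with ht
  set u₁ := stereoProj s₁ with hu₁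
  set u₂ := stereoProj s₂ with hu₂
  have hsplit : ⟪s₁, s₂⟫ = ⟪u₁, u₂⟫ + t * t := by
    rw [my_inner_split, ← hlat]
  have hn1 : ‖u₁‖ ^ 2 = 1 - t ^ 2 := by
    have := my_inner_split s₁ s₁
    rw [real_inner_self_eq_norm_sq, real_inner_self_eq_norm_sq, hs₁] at this
    nlinarith
  have hn2 : ‖u₂‖ ^ 2 = 1 - t ^ 2 := by
    have := my_inner_split s₂ s₂
    rw [real_inner_self_eq_norm_sq, real_inner_self_eq_norm_sq, hs₂, ← hlat] at this
    nlinarith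
  set q := ⟪u₁, u₂⟫ with hq
  set r := ‖u₁‖ with hr
  have hr0 : 0 ≤ r := hr ▸ norm_nonneg _
  clear_value t u₁ u₂ q r
  rcases eq_or_lt_of_le hr0 with hre | hrpos
  · -- r = 0 : both points are the south pole
    have hru : u₁ = 0 := by rw [← norm_eq_zero, ← hr, ← hre]
    have hru2 : u₂ = 0 := by
      rw [← norm_eq_zero]; nlinarith
    have hq0 : q = 0 := by rw [hq, hru, inner_zero_left]

    have ht2 : t * t = 1 := by nlinarith
    have hP : ⟪s₁, s₂⟫ = 1 := by rw [hsplit, hq0, ht2]; ring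
    have hx1 : stereo s₁ = 0 := by rw [stereo, ← hu₁, hru, smul_zero]
    have hx2 : stereo s₂ = 0 := by rw [stereo, ← hlat, ← hu₂, hru2, smul_zero]
    have hh : h1 (stereo s₁) - h1 (stereo s₂) = 0 := by
      rw [hx1, hx2]; simp [h1]
    rw [hP, hh, Real.arccos_one, norm_zero]
    exact ⟨le_refl _, by linarith [Real.pi_pos],
      le_min (le_refl _) (by linarith [Real.pi_pos])⟩
  · -- main case : r > 0
    have hr2pos : 0 < r ^ 2 := by positivity
    have ht1 : t < 1 := hlt
    have h1t2 : 0 < 1 - t ^ 2 := hn1 ▸ hr2pos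
    have htm1 : -1 < t := by nlinarith only [h1t2, sq_nonneg (1 + t)]
    have h1t : (0:ℝ) < 1 - t := by linarith
    have hn2' : ‖u₂‖ = r := by
      rw [← Real.sqrt_sq (norm_nonneg u₂), hn2, ← hn1, Real.sqrt_sq hr0]
    have hu1ne : u₁ ≠ 0 := by
      intro h; rw [h, norm_zero] at hr; exact absurd hr hrpos.ne'
    have hu2ne : u₂ ≠ 0 := by
      intro h; rw [h, norm_zero] at hn2'; exact absurd hn2'.symm hrpos.ne'
    set ρ := Real.arccos (-t) with hρ
    have hρ0 : 0 ≤ ρ := Real.arccos_nonneg _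
    have hρπ : ρ ≤ π := Real.arccos_le_pi _
    have hsinρ : Real.sin ρ = r := by
      rw [hρ, Real.sin_arccos, show 1 - (-t) ^ 2 = r ^ 2 by rw [hn1]; ring]
      exact Real.sqrt_sq hr0
    -- compute h1 (stereo sᵢ)
    have hcomp : ∀ (s : EuclideanSpace ℝ (Fin (d+1))), s (Fin.last d) = t →
        ‖stereoProj s‖ = r → h1 (stereo s) = (ρ * r⁻¹) • stereoProj s := by
      intro s hst hsn
      have hx : stereo s = (1 - t)⁻¹ • stereoProj s := by rw [stereo, hst]
      have hxnorm : ‖stereo s‖ = (1 - t)⁻¹ * r := by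
        rw [hx, norm_smul, Real.norm_eq_abs, abs_of_pos (inv_pos.mpr h1t), hsn]
      have hxne : stereo s ≠ 0 := by
        rw [hx]
        exact smul_ne_zero (inv_ne_zero (ne_of_gt h1t)) (by rw [← norm_ne_zero_iff, hsn]; exact hrpos.ne')
      have hxsq : ‖stereo s‖ ^ 2 = (1 + t) / (1 - t) := by
        rw [hxnorm]
        field_simp
        linear_combination hn1
      have harg : (1 - ‖stereo s‖ ^ 2) / (1 + ‖stereo s‖ ^ 2) = -t := by
        have hBpos : (0:ℝ) < 1 + (1 + t) / (1 - t) := by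
          have : (0:ℝ) < (1 + t) / (1 - t) := div_pos (by linarith) h1t
          linarith
        rw [hxsq, div_eq_iff (ne_of_gt hBpos)]
        field_simp
        ring
      have hdir : ‖stereo s‖⁻¹ • stereo s = r⁻¹ • stereoProj s := by
        rw [hxnorm, hx, smul_smul]
        congr 1
        rw [mul_inv, inv_inv]
        field_simp
      rw [h1, if_neg hxne, harg, hdir, smul_smul, ← hρ]
    have hh1 : h1 (stereo s₁) = (ρ * r⁻¹) • u₁ := by
      rw [hcomp s₁ ht.symm (by rw [← hu₁, ← hr]), ← hu₁]
    have hh2 : h1 (stereo s₂) = (ρ * r⁻¹) • u₂ := by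
      rw [hcomp s₂ hlat.symm (by rw [← hu₂, hn2']), ← hu₂]
    set c := ‖u₁ - u₂‖ with hc
    have hc0 : 0 ≤ c := norm_nonneg _
    have hDval : ‖h1 (stereo s₁) - h1 (stereo s₂)‖ = ρ * r⁻¹ * c := by
      rw [hh1, hh2, ← smul_sub, norm_smul, Real.norm_eq_abs,
        abs_of_nonneg (mul_nonneg hρ0 (inv_nonneg.mpr hr0)), hc]
    have hcsq : c ^ 2 = 2 * r ^ 2 - 2 * q := by
      rw [hc, norm_sub_sq_real, ← hr, hn2', ← hq]; ring
    have hcle : c ≤ 2 * r := by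
      have := norm_sub_le u₁ u₂
      rw [← hr, hn2'] at this
      linarith [this]
    set D := ρ * r⁻¹ * c with hD
    have hD0 : 0 ≤ D := hD ▸ mul_nonneg (mul_nonneg hρ0 (inv_nonneg.mpr hr0)) hc0
    have hDw : D = ρ * (c / r) := by rw [hD]; ring
    have hw2 : c / r ≤ 2 := by rw [div_le_iff₀ hrpos]; linarith
    have hw0 : 0 ≤ c / r := div_nonneg hc0 hr0
    have hkey := my_key hρ0 hρπ hw0 hw2
    rw [hsinρ] at hkey
    have hrw : r ^ 2 * (c / r) ^ 2 = c ^ 2 := by field_simp [ne_of_gt hrpos]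
    have hcosD : Real.cos D ≤ ⟪s₁, s₂⟫ := by
      rw [hDw, hsplit]
      rw [hrw] at hkey
      nlinarith only [hkey, hcsq, hn1]
    have hD2π : D ≤ 2 * π := by
      rw [hDw]
      calc ρ * (c / r) ≤ π * 2 := mul_le_mul hρπ hw2 hw0 Real.pi_pos.le
        _ = 2 * π := by ring
    rw [hDval]
    have G1 : Real.arccos ⟪s₁, s₂⟫ ≤ D := by
      by_cases hDπ : D ≤ π
      · calc Real.arccos ⟪s₁, s₂⟫ ≤ Real.arccos (Real.cos D) := my_arccos_anti hcosD
          _ = D := Real.arccos_cos hD0 hDπ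
      · linarith [Real.arccos_le_pi ⟪s₁, s₂⟫]
    have G2 : Real.arccos ⟪s₁, s₂⟫ ≤ 2 * π - D := by
      by_cases hDπ : D ≤ π
      · linarith [Real.arccos_le_pi ⟪s₁, s₂⟫]
      · have hE : Real.cos (2 * π - D) = Real.cos D := Real.cos_two_pi_sub D
        calc Real.arccos ⟪s₁, s₂⟫ ≤ Real.arccos (Real.cos (2 * π - D)) := by
              rw [hE]; exact my_arccos_anti hcosD
          _ = 2 * π - D := Real.arccos_cos (by linarith) (by linarith)
    exact ⟨G1, G2, le_min G1 G2⟩
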